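/- Define F(n; u, v₁, v₂, v₃) = Σ_{i=0}^{⌊n/2⌋} (-n/2)_i ((1-n)/2)_i (u)_i (-u - v₁ - v₂ - v₃)_i / (i! (1/2 - v₁ - n)_i (1/2 - v₂)_i (1/2 - v₃)_i). Then for every nonnegative integer n and parameters κ, v₁, v₂, v₃ (avoiding singularities), the three-term recurrence holds: n(n+2v₁)(n+κ+v₁-1/2)(κ+1/2+v₂+v₃-n) F(n-1; κ, v₁, v₂, v₃) + [n(n+2v₁)(n-v₂-v₃-1/2) + (n+1/2+v₁)(n-2v₂)(n-2v₃)](n+v₁-1/2) F(n; κ, v₁, v₂, v₃) = (n+v₁-1/2)(n+v₁+1/2)(n-2v₂)(n-2v₃) F(n+1; κ, v₁, v₂, v₃). -/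

import Mathlib

set_option maxHeartbeats 1600000

noncomputable def poch (x : ℝ) (n : ℕ) : ℝ := ∏ i ∈ Finset.range n, (x + i)

/-- The balanced terminating ₄F₃ function F(n; u, v₁, v₂, v₃). -/
noncomputable def F (n : ℕ) (u v₁ v₂ v₃ : ℝ) : ℝ :=
  ∑ i ∈ Finset.range (n / 2 + 1),
    poch (-(n : ℝ) / 2) i * poch ((1 - (n : ℝ)) / 2) i * poch u i *
        poch (-u - v₁ - v₂ - v₃) i /
      ((Nat.factorial i : ℝ) * poch (1/2 - v₁ - (n : ℝ)) i * poch (1/2 - v₂) i *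
        poch (1/2 - v₃) i)

lemma poch_zero' (x : ℝ) : poch x 0 = 1 := by simp [poch]

lemma poch_one (x : ℝ) : poch x 1 = x := by simp [poch]

lemma poch_succ (x : ℝ) (i : ℕ) : poch x (i+1) = poch x i * (x + i) :=
  Finset.prod_range_succ _ _

lemma poch_succ' (x : ℝ) (i : ℕ) : poch x (i+1) = x * poch (x+1) i := by
  rw [poch, Finset.prod_range_succ', poch]
  have h0 : x + ((0:ℕ):ℝ) = x := by norm_num
  rw [h0, mul_comm]
  congr 1
  refine Finset.prod_congr rfl fun j _ => ?_
  push_cast; ring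

lemma poch_shift (x : ℝ) (i : ℕ) : poch (x+1) i * x = poch x i * (x + i) := by
  have h1 := poch_succ x i
  have h2 := poch_succ' x i
  rw [h2] at h1
  linarith [h1]

lemma poch_eq_zero {x : ℝ} {i : ℕ} (j : ℕ) (hj : j < i) (hx : x + j = 0) : poch x i = 0 :=
  Finset.prod_eq_zero (Finset.mem_range.2 hj) hx

lemma poch_factor_ne_zero {x : ℝ} {i : ℕ} (hp : poch x i ≠ 0) {j : ℕ} (hj : j < i) :
    x + j ≠ 0 := fun hx => hp (poch_eq_zero j hj hx)

lemma fact_ne_zero (i : ℕ) : (i.factorial : ℝ) ≠ 0 := by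
  exact_mod_cast i.factorial_ne_zero

/-- The generic summand. -/
noncomputable def tA (nR u v1 v2 v3 : ℝ) (i : ℕ) : ℝ :=
  poch (-nR / 2) i * poch ((1 - nR) / 2) i * poch u i * poch (-u - v1 - v2 - v3) i /
    ((Nat.factorial i : ℝ) * poch (1/2 - v1 - nR) i * poch (1/2 - v2) i * poch (1/2 - v3) i)

lemma F_eq (m : ℕ) (u v1 v2 v3 : ℝ) :
    F m u v1 v2 v3 = ∑ i ∈ Finset.range (m / 2 + 1), tA (m : ℝ) u v1 v2 v3 i := rfl

lemma tA_vanish (m : ℕ) (u v1 v2 v3 : ℝ) {i : ℕ} (hi : m / 2 < i) :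
    tA (m : ℝ) u v1 v2 v3 i = 0 := by
  rcases Nat.even_or_odd m with ⟨j, hj⟩ | ⟨j, hj⟩
  · have h0 : poch (-(m : ℝ) / 2) i = 0 := by
      refine poch_eq_zero j (by omega) ?_
      subst hj; push_cast; ring
    simp [tA, h0]
  · have h0 : poch ((1 - (m : ℝ)) / 2) i = 0 := by
      refine poch_eq_zero j (by omega) ?_
      subst hj; push_cast; ring
    simp [tA, h0]

/-- Telescoping certificate function. -/
noncomputable def GG (nR u v1 v2 v3 : ℝ) : ℕ → ℝ
  | 0 => 0
  | (j+1) => (-2*(nR+2*v1)*(nR+v1-1/2)) * poch (-nR/2) (j+1) * poch ((1-nR)/2) j *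
      poch u (j+1) * poch (-u-v1-v2-v3) (j+1) /
      ((Nat.factorial j : ℝ) * poch (1/2-v1-nR) (j+1) * poch (1/2-v2) j * poch (1/2-v3) j)

lemma GG_zero (nR u v1 v2 v3 : ℝ) : GG nR u v1 v2 v3 0 = 0 := rfl

lemma GG_succ (nR u v1 v2 v3 : ℝ) (j : ℕ) :
    GG nR u v1 v2 v3 (j+1) = (-2*(nR+2*v1)*(nR+v1-1/2)) * poch (-nR/2) (j+1) *
      poch ((1-nR)/2) j * poch u (j+1) * poch (-u-v1-v2-v3) (j+1) /
      ((Nat.factorial j : ℝ) * poch (1/2-v1-nR) (j+1) * poch (1/2-v2) j * poch (1/2-v3) j) := rfl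

lemma GG_eq (nR u v1 v2 v3 : ℝ) (i : ℕ)
    (hB : poch (1/2-v2) i ≠ 0) (hC : poch (1/2-v3) i ≠ 0)
    (hy : (1-nR)/2 - 1 + (i:ℝ) ≠ 0) :
    GG nR u v1 v2 v3 i = (-2*(nR+2*v1)*(nR+v1-1/2)) *
      ((i:ℝ)*((1/2-v2)+(i:ℝ)-1)*((1/2-v3)+(i:ℝ)-1)) *
      (poch (-nR/2) i * poch ((1-nR)/2) i * poch u i * poch (-u-v1-v2-v3) i) /
      (((1-nR)/2-1+(i:ℝ)) * ((Nat.factorial i : ℝ) * poch (1/2-v1-nR) i * poch (1/2-v2) i *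
        poch (1/2-v3) i)) := by
  cases i with
  | zero => simp [GG]
  | succ j =>
    rw [poch_succ (1/2-v2)] at hB
    rw [poch_succ (1/2-v3)] at hC
    obtain ⟨hBj, hbj⟩ := mul_ne_zero_iff.mp hB
    obtain ⟨hCj, hcj⟩ := mul_ne_zero_iff.mp hC
    have hyj : (1-nR)/2 + (j:ℝ) ≠ 0 := by
      intro hq; apply hy; push_cast; linarith
    rcases eq_or_ne (poch (1/2-v1-nR) (j+1)) 0 with hZ | hZ
    · rw [GG_succ, hZ]
      simp
    · rw [GG_succ, poch_succ ((1-nR)/2), poch_succ (1/2-v2), poch_succ (1/2-v3),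
        Nat.factorial_succ]
      push_cast
      have hy' : (1-nR)/2 - 1 + ((j:ℝ)+1) ≠ 0 := by
        intro hq; apply hy; push_cast; linarith
      rw [div_eq_div_iff (by positivity) ?hd]
      · ring
      case hd =>
        have hj1 : ((j:ℝ)+1) ≠ 0 := by positivity
        have hfj : ((j.factorial : ℕ) : ℝ) ≠ 0 := fact_ne_zero j
        positivity

lemma key (nR u v1 v2 v3 iR A Y U S Z B C Fi : ℝ)
    (hFi : Fi ≠ 0) (hZ : Z ≠ 0) (hB : B ≠ 0) (hC : C ≠ 0)
    (ha : nR ≠ 0) (hz : 1/2 - v1 - nR ≠ 0) (hz1 : 1/2 - v1 - nR - 1 ≠ 0)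
    (hzi : 1/2 - v1 - nR + iR ≠ 0) (hzmi : 1/2 - v1 - nR - 1 + iR ≠ 0)
    (hy1 : (1 - nR)/2 - 1 + iR ≠ 0) :
    nR*(nR+2*v1)*(nR+u+v1-1/2)*(u+1/2+v2+v3-nR) *
      ((1/2-v1-nR) * (-nR/2+iR)) * (A*Y*U*S) /
        ((-nR/2) * ((1/2-v1-nR)+iR) * (Fi*Z*B*C))
    + (nR*(nR+2*v1)*(nR-v2-v3-1/2)+(nR+1/2+v1)*(nR-2*v2)*(nR-2*v3))*(nR+v1-1/2) *
      (A*Y*U*S)/(Fi*Z*B*C)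
    - (nR+v1-1/2)*(nR+v1+1/2)*(nR-2*v2)*(nR-2*v3) *
      (((1-nR)/2-1) * ((1/2-v1-nR)-1+iR)) * (A*Y*U*S) /
        (((1-nR)/2-1+iR) * ((1/2-v1-nR)-1) * (Fi*Z*B*C))
    = (-2*(nR+2*v1)*(nR+v1-1/2)) * ((-nR/2+iR)*(u+iR)*(-u-v1-v2-v3+iR)) * (A*Y*U*S) /
        (((1/2-v1-nR)+iR) * (Fi*Z*B*C))
      - (-2*(nR+2*v1)*(nR+v1-1/2)) * (iR*((1/2-v2)+iR-1)*((1/2-v3)+iR-1)) * (A*Y*U*S) /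
        (((1 - nR)/2 - 1 + iR)*(Fi*Z*B*C)) := by
  have hD : Fi*Z*B*C ≠ 0 := by positivity
  have ha2 : (-nR/2) ≠ 0 := by simp [ha]
  rw [div_add_div _ _ (by positivity) hD, div_sub_div _ _ (by positivity) (by positivity),
      div_sub_div _ _ (by positivity) (by positivity), div_eq_div_iff (by positivity) (by positivity)]
  ring

lemma keyB1 (nR kR u v1 v2 v3 A Y U S Z B C Fi : ℝ) (hnk : nR = 2*kR)
    (hFi : Fi ≠ 0) (hZ : Z ≠ 0) (hB : B ≠ 0) (hC : C ≠ 0)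
    (hz1 : 1/2 - v1 - nR - 1 ≠ 0) (hzmi : 1/2 - v1 - nR - 1 + kR ≠ 0)
    (hy1 : (1 - nR)/2 - 1 + kR ≠ 0) :
    (nR*(nR+2*v1)*(nR-v2-v3-1/2)+(nR+1/2+v1)*(nR-2*v2)*(nR-2*v3))*(nR+v1-1/2) *
      (A*Y*U*S)/(Fi*Z*B*C)
    - (nR+v1-1/2)*(nR+v1+1/2)*(nR-2*v2)*(nR-2*v3) *
      (((1-nR)/2-1) * ((1/2-v1-nR)-1+kR)) * (A*Y*U*S) /
        (((1-nR)/2-1+kR) * ((1/2-v1-nR)-1) * (Fi*Z*B*C))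
    = - ((-2*(nR+2*v1)*(nR+v1-1/2)) * (kR*((1/2-v2)+kR-1)*((1/2-v3)+kR-1)) * (A*Y*U*S) /
        (((1-nR)/2-1+kR)*(Fi*Z*B*C))) := by
  subst hnk
  have hD : Fi*Z*B*C ≠ 0 := by positivity
  rw [div_sub_div _ _ hD (by positivity), ← neg_div, div_eq_div_iff (by positivity) (by positivity)]
  ring

lemma keyB2 (nR kR u v1 v2 v3 P Yk U1 S1 Zm Bk Ck Fk : ℝ) (hnk : nR = 2*kR+1)
    (hFk : Fk ≠ 0) (hZm : Zm ≠ 0) (hBk : Bk ≠ 0) (hCk : Ck ≠ 0)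
    (hz1 : 1/2 - v1 - nR - 1 ≠ 0) (hzk : 1/2 - v1 - nR + kR ≠ 0)
    (hbk : (1/2-v2)+kR ≠ 0) (hck : (1/2-v3)+kR ≠ 0) (hk1 : kR + 1 ≠ 0) :
    (nR+v1-1/2)*(nR+v1+1/2)*(nR-2*v2)*(nR-2*v3) *
      ((((1-nR)/2) - 1) * Yk * P * U1 * S1) /
        (((kR+1)*Fk) * Zm * (Bk*((1/2-v2)+kR)) * (Ck*((1/2-v3)+kR)))
    = (-2*(nR+2*v1)*(nR+v1-1/2)) * P * Yk * U1 * S1 * (1/2 - v1 - nR - 1) /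
        (Fk * Zm * ((1/2 - v1 - nR - 1)+(kR+1)) * Bk * Ck) := by
  subst hnk
  have hzz : (1/2 - v1 - (2*kR+1) - 1)+(kR+1) ≠ 0 := by
    intro hq; apply hzk; linarith
  rw [div_eq_div_iff (by positivity) (by positivity)]
  ring

lemma eP_alg (A Y U S Fi Z B C y z iR : ℝ) (hy : y - 1 + iR ≠ 0) (hz : z - 1 + iR ≠ 0)
    (hz1 : z - 1 ≠ 0) (hFi : Fi ≠ 0) (hZ : Z ≠ 0) (hB : B ≠ 0) (hC : C ≠ 0) :
    Y * (y - 1) / (y - 1 + iR) * A * U * S / (Fi * (Z * (z - 1) / (z - 1 + iR)) * B * C)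
      = (y - 1) * (z - 1 + iR) * (A * Y * U * S) / ((y - 1 + iR) * (z - 1) * (Fi * Z * B * C)) := by
  field_simp

/-- Three-term recurrence for F. -/
theorem stmt12 (n : ℕ) (κ v₁ v₂ v₃ : ℝ)
    (h : ∀ m : ℕ, m ≤ n + 1 → ∀ i ≤ m / 2,
      poch (1/2 - v₁ - (m : ℝ)) i ≠ 0 ∧ poch (1/2 - v₂) i ≠ 0 ∧ poch (1/2 - v₃) i ≠ 0) :
    (n : ℝ) * ((n : ℝ) + 2 * v₁) * ((n : ℝ) + κ + v₁ - 1/2) *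
        (κ + 1/2 + v₂ + v₃ - (n : ℝ)) * F (n - 1) κ v₁ v₂ v₃
      + ((n : ℝ) * ((n : ℝ) + 2 * v₁) * ((n : ℝ) - v₂ - v₃ - 1/2)
          + ((n : ℝ) + 1/2 + v₁) * ((n : ℝ) - 2 * v₂) * ((n : ℝ) - 2 * v₃)) *
        ((n : ℝ) + v₁ - 1/2) * F n κ v₁ v₂ v₃
    = ((n : ℝ) + v₁ - 1/2) * ((n : ℝ) + v₁ + 1/2) * ((n : ℝ) - 2 * v₂) *
        ((n : ℝ) - 2 * v₃) * F (n + 1) κ v₁ v₂ v₃ := by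
  have hF0 : F 0 κ v₁ v₂ v₃ = 1 := by norm_num [F, poch]
  have hF1 : F 1 κ v₁ v₂ v₃ = 1 := by norm_num [F, poch]
  by_cases h0 : n = 0
  · subst h0
    rw [show (0-1 : ℕ) = 0 from rfl, hF0, hF1]
    push_cast
    ring
  by_cases h1 : n = 1
  · subst h1
    have h2 := h 2 (by norm_num) 1 (by norm_num)
    have hz : 1/2 - v₁ - ((2:ℕ):ℝ) ≠ 0 := by
      have := poch_factor_ne_zero h2.1 (show 0 < 1 by norm_num)
      intro hq; apply this; push_cast; linarith
    have hb : 1/2 - v₂ ≠ 0 := by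
      have := poch_factor_ne_zero h2.2.1 (show 0 < 1 by norm_num)
      intro hq; apply this; push_cast; linarith
    have hc : 1/2 - v₃ ≠ 0 := by
      have := poch_factor_ne_zero h2.2.2 (show 0 < 1 by norm_num)
      intro hq; apply this; push_cast; linarith
    have hz' : 1/2 - v₁ - (2:ℝ) ≠ 0 := by push_cast at hz; exact hz
    have hF2 : F 2 κ v₁ v₂ v₃ = 1 + (-(2:ℝ)/2) * ((1-(2:ℝ))/2) * κ * (-κ-v₁-v₂-v₃) /
        ((1:ℝ) * (1/2-v₁-(2:ℝ)) * (1/2-v₂) * (1/2-v₃)) := by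
      rw [F_eq]
      norm_num [Finset.sum_range_succ, tA, poch_one, poch_zero']
    have hD : (1:ℝ) * (1/2-v₁-(2:ℝ)) * (1/2-v₂) * (1/2-v₃) ≠ 0 :=
      mul_ne_zero (mul_ne_zero (mul_ne_zero one_ne_zero hz') hb) hc
    rw [show (1-1 : ℕ) = 0 from rfl, hF0, hF1, show (1+1 : ℕ) = 2 from rfl, hF2,
      add_div' _ _ _ hD, ← mul_div_assoc, eq_div_iff hD]
    push_cast
    ring
  -- main case: n ≥ 2
  have hn2 : 2 ≤ n := by omega
  have h1n : 1 ≤ n := by omega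
  have hcast : ((n-1 : ℕ) : ℝ) = (n:ℝ) - 1 := by
    rw [Nat.cast_sub h1n, Nat.cast_one]
  have hcast2 : ((n+1 : ℕ) : ℝ) = (n:ℝ) + 1 := by push_cast; ring
  have hBfun : ∀ i, i ≤ (n+1)/2 → poch (1/2 - v₂) i ≠ 0 :=
    fun i hi => (h (n+1) le_rfl i (by omega)).2.1
  have hCfun : ∀ i, i ≤ (n+1)/2 → poch (1/2 - v₃) i ≠ 0 :=
    fun i hi => (h (n+1) le_rfl i (by omega)).2.2
  have hZfun : ∀ i, i ≤ n/2 → poch (1/2 - v₁ - (n:ℝ)) i ≠ 0 :=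
    fun i hi => (h n (by omega) i hi).1
  have hZpfun : ∀ i, i ≤ (n-1)/2 → poch (1/2 - v₁ - ((n:ℝ)-1)) i ≠ 0 := by
    intro i hi
    have := (h (n-1) (by omega) i (by omega)).1
    rwa [hcast] at this
  have hZmfun : ∀ i, i ≤ (n+1)/2 → poch (1/2 - v₁ - ((n:ℝ)+1)) i ≠ 0 := by
    intro i hi
    have := (h (n+1) le_rfl i (by omega)).1
    rwa [hcast2] at this
  have hnne : (n:ℝ) ≠ 0 := Nat.cast_ne_zero.2 (by omega)
  have hz0 : (1/2 - v₁ - (n:ℝ)) ≠ 0 := by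
    have := poch_factor_ne_zero (hZfun 1 (by omega)) (show 0 < 1 by norm_num)
    intro hq; apply this; push_cast; linarith
  have hz1 : (1/2 - v₁ - (n:ℝ)) - 1 ≠ 0 := by
    have := poch_factor_ne_zero (hZmfun 1 (by omega)) (show 0 < 1 by norm_num)
    intro hq; apply this; push_cast; linarith
  have hFm : F (n-1) κ v₁ v₂ v₃ = ∑ i ∈ Finset.range ((n+1)/2+1), tA ((n:ℝ)-1) κ v₁ v₂ v₃ i := by
    rw [F_eq, hcast]
    refine Finset.sum_subset (Finset.range_subset_range.2 (by omega)) ?_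
    intro i hi hni
    rw [Finset.mem_range] at hni
    rw [← hcast]
    exact tA_vanish (n-1) _ _ _ _ (by omega)
  have hFn : F n κ v₁ v₂ v₃ = ∑ i ∈ Finset.range ((n+1)/2+1), tA (n:ℝ) κ v₁ v₂ v₃ i := by
    rw [F_eq]
    refine Finset.sum_subset (Finset.range_subset_range.2 (by omega)) ?_
    intro i hi hni
    rw [Finset.mem_range] at hni
    exact tA_vanish n _ _ _ _ (by omega)
  have hFp : F (n+1) κ v₁ v₂ v₃ = ∑ i ∈ Finset.range ((n+1)/2+1), tA ((n:ℝ)+1) κ v₁ v₂ v₃ i := by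
    rw [F_eq, hcast2]
  rw [hFm, hFn, hFp, Finset.mul_sum, Finset.mul_sum, Finset.mul_sum, ← sub_eq_zero,
    ← Finset.sum_add_distrib, ← Finset.sum_sub_distrib]
  have htop : GG (n:ℝ) κ v₁ v₂ v₃ ((n+1)/2+1) = 0 := by
    rcases Nat.even_or_odd n with ⟨k, hk⟩ | ⟨k, hk⟩
    · have hM' : (n+1)/2+1 = k + 1 := by omega
      have h0 : poch (-(n:ℝ)/2) (k+1) = 0 := by
        refine poch_eq_zero k (by omega) ?_
        have : (n:ℝ) = (k:ℝ) + (k:ℝ) := by rw [hk]; push_cast; ring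
        rw [this]; ring
      rw [hM', GG_succ, h0]; simp
    · have hM' : (n+1)/2+1 = (k+1) + 1 := by omega
      have h0 : poch ((1-(n:ℝ))/2) (k+1) = 0 := by
        refine poch_eq_zero k (by omega) ?_
        have : (n:ℝ) = 2*(k:ℝ) + 1 := by rw [hk]; push_cast; ring
        rw [this]; ring
      rw [hM', GG_succ, h0]; simp
  have hsum : (∑ i ∈ Finset.range ((n+1)/2+1),
      (GG (n:ℝ) κ v₁ v₂ v₃ (i+1) - GG (n:ℝ) κ v₁ v₂ v₃ i)) = 0 := by
    rw [Finset.sum_range_sub, htop, GG_zero, sub_zero]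
  refine Eq.trans (Finset.sum_congr rfl ?_) hsum
  intro i hi
  rw [Finset.mem_range] at hi
  by_cases hib : i ≤ (n-1)/2
  -- generic case
  · have hB : poch (1/2-v₂) i ≠ 0 := hBfun i (by omega)
    have hC : poch (1/2-v₃) i ≠ 0 := hCfun i (by omega)
    have hZ : poch (1/2-v₁-(n:ℝ)) i ≠ 0 := hZfun i (by omega)
    have hZp : poch (1/2-v₁-((n:ℝ)-1)) i ≠ 0 := hZpfun i hib
    have hZm1 : poch (1/2-v₁-((n:ℝ)+1)) (i+1) ≠ 0 := hZmfun (i+1) (by omega)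
    have hzmi : (1/2-v₁-(n:ℝ)) - 1 + (i:ℝ) ≠ 0 := by
      have := poch_factor_ne_zero hZm1 (show i < i+1 by omega)
      intro hq; apply this; push_cast; linarith
    have hzi : (1/2-v₁-(n:ℝ)) + (i:ℝ) ≠ 0 := by
      rcases lt_or_ge i (n/2) with hlt | hge
      · have := poch_factor_ne_zero (hZfun (i+1) (by omega)) (show i < i+1 by omega)
        intro hq; apply this; push_cast; linarith
      · have hi1 : 1 ≤ i := by omega
        have := poch_factor_ne_zero hZp (show i-1 < i by omega)
        intro hq; apply this
        rw [Nat.cast_sub hi1, Nat.cast_one]; linarith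
    have hy1 : (1-(n:ℝ))/2 - 1 + (i:ℝ) ≠ 0 := by
      have h2i : 2*i + 1 ≤ n := by omega
      have h2i' : 2*(i:ℝ) + 1 ≤ (n:ℝ) := by exact_mod_cast h2i
      intro hq; linarith
    have hFc : (Nat.factorial i : ℝ) ≠ 0 := fact_ne_zero i
    have e1 : poch (-((n:ℝ)-1)/2) i = poch ((1-(n:ℝ))/2) i := by
      rw [show -((n:ℝ)-1)/2 = (1-(n:ℝ))/2 by ring]
    have e2 : poch ((1-((n:ℝ)-1))/2) i = poch (-(n:ℝ)/2) i * (-(n:ℝ)/2 + (i:ℝ)) / (-(n:ℝ)/2) := by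
      have hane : -(n:ℝ)/2 ≠ 0 := by simp [hnne]
      rw [show (1-((n:ℝ)-1))/2 = -(n:ℝ)/2 + 1 by ring, eq_div_iff hane]
      exact poch_shift _ _
    have e3 : poch (1/2 - v₁ - ((n:ℝ)-1)) i
        = poch (1/2-v₁-(n:ℝ)) i * ((1/2-v₁-(n:ℝ)) + (i:ℝ)) / (1/2-v₁-(n:ℝ)) := by
      rw [show (1/2 - v₁ - ((n:ℝ)-1)) = (1/2-v₁-(n:ℝ)) + 1 by ring, eq_div_iff hz0]
      exact poch_shift _ _
    have e4 : poch (-((n:ℝ)+1)/2) i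
        = poch ((1-(n:ℝ))/2) i * ((1-(n:ℝ))/2 - 1) / ((1-(n:ℝ))/2 - 1 + (i:ℝ)) := by
      rw [show -((n:ℝ)+1)/2 = (1-(n:ℝ))/2 - 1 by ring, eq_div_iff hy1]
      have hs := poch_shift ((1-(n:ℝ))/2 - 1) i
      rw [show (1-(n:ℝ))/2 - 1 + 1 = (1-(n:ℝ))/2 by ring] at hs
      linarith [hs]
    have e5 : poch ((1-((n:ℝ)+1))/2) i = poch (-(n:ℝ)/2) i := by
      rw [show (1-((n:ℝ)+1))/2 = -(n:ℝ)/2 by ring]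
    have e6 : poch (1/2 - v₁ - ((n:ℝ)+1)) i
        = poch (1/2-v₁-(n:ℝ)) i * ((1/2-v₁-(n:ℝ)) - 1) / ((1/2-v₁-(n:ℝ)) - 1 + (i:ℝ)) := by
      rw [show 1/2 - v₁ - ((n:ℝ)+1) = (1/2-v₁-(n:ℝ)) - 1 by ring, eq_div_iff hzmi]
      have hs := poch_shift ((1/2-v₁-(n:ℝ)) - 1) i
      rw [show (1/2-v₁-(n:ℝ)) - 1 + 1 = 1/2-v₁-(n:ℝ) by ring] at hs
      linarith [hs]
    have eL : tA ((n:ℝ)-1) κ v₁ v₂ v₃ i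
        = ((1/2-v₁-(n:ℝ)) * (-(n:ℝ)/2+(i:ℝ))) *
            (poch (-(n:ℝ)/2) i * poch ((1-(n:ℝ))/2) i * poch κ i * poch (-κ-v₁-v₂-v₃) i) /
          ((-(n:ℝ)/2) * ((1/2-v₁-(n:ℝ))+(i:ℝ)) *
            ((Nat.factorial i : ℝ) * poch (1/2-v₁-(n:ℝ)) i * poch (1/2-v₂) i * poch (1/2-v₃) i)) := by
      simp only [tA]
      rw [e1, e2, e3]
      have hane : -(n:ℝ)/2 ≠ 0 := by simp [hnne]
      field_simp
    have eP : tA ((n:ℝ)+1) κ v₁ v₂ v₃ i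
        = ((1-(n:ℝ))/2-1) * ((1/2-v₁-(n:ℝ))-1+(i:ℝ)) *
            (poch (-(n:ℝ)/2) i * poch ((1-(n:ℝ))/2) i * poch κ i * poch (-κ-v₁-v₂-v₃) i) /
          (((1-(n:ℝ))/2-1+(i:ℝ)) * ((1/2-v₁-(n:ℝ))-1) *
            ((Nat.factorial i : ℝ) * poch (1/2-v₁-(n:ℝ)) i * poch (1/2-v₂) i * poch (1/2-v₃) i)) := by
      simp only [tA]
      rw [e4, e5, e6]
      exact eP_alg _ _ _ _ _ _ _ _ _ _ _ hy1 hzmi hz1 hFc hZ hB hC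
    rw [eL, eP, GG_succ, GG_eq (n:ℝ) κ v₁ v₂ v₃ i hB hC hy1]
    simp only [tA]
    rw [poch_succ (-(n:ℝ)/2), poch_succ κ,
      poch_succ (-κ-v₁-v₂-v₃), poch_succ (1/2-v₁-(n:ℝ))]
    linear_combination key (n:ℝ) κ v₁ v₂ v₃ (i:ℝ) (poch (-(n:ℝ)/2) i) (poch ((1-(n:ℝ))/2) i)
      (poch κ i) (poch (-κ-v₁-v₂-v₃) i) (poch (1/2-v₁-(n:ℝ)) i) (poch (1/2-v₂) i)
      (poch (1/2-v₃) i) (Nat.factorial i : ℝ) hFc hZ hB hC hnne hz0 hz1 hzi hzmi hy1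
  -- boundary case
  · rcases Nat.even_or_odd n with ⟨k, hk⟩ | ⟨k, hk⟩
    -- n even, i = k
    · obtain rfl : i = k := by omega
      have hk1 : 1 ≤ i := by omega
      have hnR : (n:ℝ) = 2*(i:ℝ) := by rw [hk]; push_cast; ring
      have hB : poch (1/2-v₂) i ≠ 0 := hBfun i (by omega)
      have hC : poch (1/2-v₃) i ≠ 0 := hCfun i (by omega)
      have hZ : poch (1/2-v₁-(n:ℝ)) i ≠ 0 := hZfun i (by omega)
      have hFc : (Nat.factorial i : ℝ) ≠ 0 := fact_ne_zero i
      have hm0 : tA ((n:ℝ)-1) κ v₁ v₂ v₃ i = 0 := by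
        rw [← hcast]; exact tA_vanish (n-1) _ _ _ _ (by omega)
      have hg0 : GG (n:ℝ) κ v₁ v₂ v₃ (i+1) = 0 := by
        rw [GG_succ, poch_eq_zero i (by omega) (show -(n:ℝ)/2 + (i:ℝ) = 0 by rw [hnR]; ring)]
        simp
      have hzmi : (1/2-v₁-(n:ℝ)) - 1 + (i:ℝ) ≠ 0 := by
        have := poch_factor_ne_zero hZ (show i-1 < i by omega)
        intro hq; apply this
        rw [Nat.cast_sub hk1, Nat.cast_one]; linarith
      have hy1 : (1-(n:ℝ))/2 - 1 + (i:ℝ) ≠ 0 := by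
        rw [hnR]; intro hq; linarith
      have e4 : poch (-((n:ℝ)+1)/2) i
          = poch ((1-(n:ℝ))/2) i * ((1-(n:ℝ))/2 - 1) / ((1-(n:ℝ))/2 - 1 + (i:ℝ)) := by
        rw [show -((n:ℝ)+1)/2 = (1-(n:ℝ))/2 - 1 by ring, eq_div_iff hy1]
        have hs := poch_shift ((1-(n:ℝ))/2 - 1) i
        rw [show (1-(n:ℝ))/2 - 1 + 1 = (1-(n:ℝ))/2 by ring] at hs
        linarith [hs]
      have e5 : poch ((1-((n:ℝ)+1))/2) i = poch (-(n:ℝ)/2) i := by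
        rw [show (1-((n:ℝ)+1))/2 = -(n:ℝ)/2 by ring]
      have e6 : poch (1/2 - v₁ - ((n:ℝ)+1)) i
          = poch (1/2-v₁-(n:ℝ)) i * ((1/2-v₁-(n:ℝ)) - 1) / ((1/2-v₁-(n:ℝ)) - 1 + (i:ℝ)) := by
        rw [show 1/2 - v₁ - ((n:ℝ)+1) = (1/2-v₁-(n:ℝ)) - 1 by ring, eq_div_iff hzmi]
        have hs := poch_shift ((1/2-v₁-(n:ℝ)) - 1) i
        rw [show (1/2-v₁-(n:ℝ)) - 1 + 1 = 1/2-v₁-(n:ℝ) by ring] at hs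
        linarith [hs]
      have eP : tA ((n:ℝ)+1) κ v₁ v₂ v₃ i
          = ((1-(n:ℝ))/2-1) * ((1/2-v₁-(n:ℝ))-1+(i:ℝ)) *
              (poch (-(n:ℝ)/2) i * poch ((1-(n:ℝ))/2) i * poch κ i * poch (-κ-v₁-v₂-v₃) i) /
            (((1-(n:ℝ))/2-1+(i:ℝ)) * ((1/2-v₁-(n:ℝ))-1) *
              ((Nat.factorial i : ℝ) * poch (1/2-v₁-(n:ℝ)) i * poch (1/2-v₂) i * poch (1/2-v₃) i)) := by
        simp only [tA]
        rw [e4, e5, e6]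
        exact eP_alg _ _ _ _ _ _ _ _ _ _ _ hy1 hzmi hz1 hFc hZ hB hC
      rw [hm0, hg0, eP, GG_eq (n:ℝ) κ v₁ v₂ v₃ i hB hC hy1]
      simp only [tA]
      linear_combination keyB1 (n:ℝ) (i:ℝ) κ v₁ v₂ v₃ (poch (-(n:ℝ)/2) i)
        (poch ((1-(n:ℝ))/2) i) (poch κ i) (poch (-κ-v₁-v₂-v₃) i) (poch (1/2-v₁-(n:ℝ)) i)
        (poch (1/2-v₂) i) (poch (1/2-v₃) i) (Nat.factorial i : ℝ) hnR hFc hZ hB hC hz1 hzmi hy1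
    -- n odd, i = k+1
    · have hik : i = k + 1 := by omega
      subst hik
      have hk1 : 1 ≤ k := by omega
      have hnR : (n:ℝ) = 2*(k:ℝ)+1 := by rw [hk]; push_cast; ring
      have hm0 : tA ((n:ℝ)-1) κ v₁ v₂ v₃ (k+1) = 0 := by
        rw [← hcast]; exact tA_vanish (n-1) _ _ _ _ (by omega)
      have h00 : tA (n:ℝ) κ v₁ v₂ v₃ (k+1) = 0 := tA_vanish n _ _ _ _ (by omega)
      have hg0 : GG (n:ℝ) κ v₁ v₂ v₃ (k+1+1) = 0 := by
        rw [GG_succ, poch_eq_zero k (by omega)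
          (show (1-(n:ℝ))/2 + (k:ℝ) = 0 by rw [hnR]; ring)]
        simp
      have hFk : (Nat.factorial k : ℝ) ≠ 0 := fact_ne_zero k
      have hZm : poch ((1/2-v₁-(n:ℝ))-1) (k+1) ≠ 0 := by
        have := hZmfun (k+1) (by omega)
        rwa [show 1/2 - v₁ - ((n:ℝ)+1) = (1/2-v₁-(n:ℝ)) - 1 by ring] at this
      have hBk : poch (1/2-v₂) k ≠ 0 := hBfun k (by omega)
      have hCk : poch (1/2-v₃) k ≠ 0 := hCfun k (by omega)
      have hbk : (1/2-v₂) + (k:ℝ) ≠ 0 :=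
        poch_factor_ne_zero (hBfun (k+1) (by omega)) (show k < k+1 by omega)
      have hck : (1/2-v₃) + (k:ℝ) ≠ 0 :=
        poch_factor_ne_zero (hCfun (k+1) (by omega)) (show k < k+1 by omega)
      have hkk1 : (k:ℝ) + 1 ≠ 0 := by positivity
      have hzk : (1/2-v₁-(n:ℝ)) + (k:ℝ) ≠ 0 := by
        have hp := hZpfun k (by omega)
        have := poch_factor_ne_zero hp (show k-1 < k by omega)
        intro hq; apply this
        rw [Nat.cast_sub hk1, Nat.cast_one]; linarith
      have e4' : poch (-((n:ℝ)+1)/2) (k+1) = ((1-(n:ℝ))/2 - 1) * poch ((1-(n:ℝ))/2) k := by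
        rw [show -((n:ℝ)+1)/2 = (1-(n:ℝ))/2 - 1 by ring, poch_succ',
          show (1-(n:ℝ))/2 - 1 + 1 = (1-(n:ℝ))/2 by ring]
      have e5' : poch ((1-((n:ℝ)+1))/2) (k+1) = poch (-(n:ℝ)/2) (k+1) := by
        rw [show (1-((n:ℝ)+1))/2 = -(n:ℝ)/2 by ring]
      have e6' : poch (1/2-v₁-((n:ℝ)+1)) (k+1) = poch ((1/2-v₁-(n:ℝ))-1) (k+1) := by
        rw [show 1/2 - v₁ - ((n:ℝ)+1) = (1/2-v₁-(n:ℝ)) - 1 by ring]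
      have ez : poch (1/2-v₁-(n:ℝ)) (k+1)
          = poch ((1/2-v₁-(n:ℝ))-1) (k+1) * (((1/2-v₁-(n:ℝ))-1) + ((k:ℝ)+1))
            / ((1/2-v₁-(n:ℝ))-1) := by
        rw [eq_div_iff hz1]
        have hs := poch_shift ((1/2-v₁-(n:ℝ))-1) (k+1)
        rw [show (1/2-v₁-(n:ℝ))-1+1 = 1/2-v₁-(n:ℝ) by ring] at hs
        push_cast at hs
        linarith [hs]
      have eb : poch (1/2-v₂) (k+1) = poch (1/2-v₂) k * ((1/2-v₂) + (k:ℝ)) := poch_succ _ _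
      have ec : poch (1/2-v₃) (k+1) = poch (1/2-v₃) k * ((1/2-v₃) + (k:ℝ)) := poch_succ _ _
      have efact : ((k+1).factorial : ℝ) = ((k:ℝ)+1) * (k.factorial : ℝ) := by
        rw [Nat.factorial_succ]; push_cast; ring
      have hzz : ((1/2-v₁-(n:ℝ))-1) + ((k:ℝ)+1) ≠ 0 := by
        intro hq; apply hzk; linarith
      have eGk : GG (n:ℝ) κ v₁ v₂ v₃ (k+1)
          = (-2*((n:ℝ)+2*v₁)*((n:ℝ)+v₁-1/2)) * poch (-(n:ℝ)/2) (k+1) * poch ((1-(n:ℝ))/2) k *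
              poch κ (k+1) * poch (-κ-v₁-v₂-v₃) (k+1) * ((1/2-v₁-(n:ℝ))-1) /
            ((Nat.factorial k : ℝ) * poch ((1/2-v₁-(n:ℝ))-1) (k+1) *
              (((1/2-v₁-(n:ℝ))-1)+((k:ℝ)+1)) * poch (1/2-v₂) k * poch (1/2-v₃) k) := by
        rw [GG_succ, ez,
          show (Nat.factorial k : ℝ) * (poch ((1/2-v₁-(n:ℝ))-1) (k+1) *
              (((1/2-v₁-(n:ℝ))-1)+((k:ℝ)+1)) / ((1/2-v₁-(n:ℝ))-1)) * poch (1/2-v₂) k *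
              poch (1/2-v₃) k
            = ((Nat.factorial k : ℝ) * poch ((1/2-v₁-(n:ℝ))-1) (k+1) *
              (((1/2-v₁-(n:ℝ))-1)+((k:ℝ)+1)) * poch (1/2-v₂) k * poch (1/2-v₃) k) /
              ((1/2-v₁-(n:ℝ))-1) from by ring,
          div_div_eq_mul_div]
      rw [hm0, h00, hg0, eGk]
      simp only [tA]
      rw [e4', e5', e6', eb, ec, efact]
      linear_combination (-1 : ℝ) * keyB2 (n:ℝ) (k:ℝ) κ v₁ v₂ v₃ (poch (-(n:ℝ)/2) (k+1))
        (poch ((1-(n:ℝ))/2) k) (poch κ (k+1)) (poch (-κ-v₁-v₂-v₃) (k+1))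
        (poch ((1/2-v₁-(n:ℝ))-1) (k+1)) (poch (1/2-v₂) k) (poch (1/2-v₃) k)
        (Nat.factorial k : ℝ) hnR hFk hZm hBk hCk hz1 hzk hbk hck hkk1
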